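/- Fix 0 < β < 1/5, a constant A1 > 0, and functions A2, A3 : (0,∞) → (0,∞). Then there exist a constant C > 0 and a threshold x0 such that for all x ≥ x0, every nonnegative multiplicative f in M(β) relative to x, every δ with 3/4 < δ ≤ 1, and every integer k ≥ 1: ∑_{n ≤ x, gcd(n,k)=1, n J-rough} f(n)/n^δ ≤ C · exp(∑_{J < p ≤ x prime, p ∤ k} f(p)/p^δ), where J = (log log x)^{1−β}. -/

import Mathlib

open Finset

noncomputable section

/-- A nonnegative multiplicative function: `f ≥ 0`, `f 1 = 1`, and
`f (m n) = f m * f n` whenever `gcd (m, n) = 1`. -/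
def MultNonneg (f : ℕ → ℝ) : Prop :=
  (∀ n, 0 ≤ f n) ∧ f 1 = 1 ∧ ∀ m n : ℕ, Nat.Coprime m n → f (m * n) = f m * f n

/-- The class `M(β)` relative to `x`:
(Condition 1) `f (p^l) ≤ A1^l * (log log x)^(β l)` for all primes `p` and `l ≥ 1`;
(Condition 2) `f n ≤ max (A2 ε * x^ε) (A3 ε * (log x)^ε)` for every `ε > 0`, `n ≥ 1`. -/
def InMβ (f : ℕ → ℝ) (x β A1 : ℝ) (A2 A3 : ℝ → ℝ) : Prop :=
  (∀ p : ℕ, p.Prime → ∀ l : ℕ, 1 ≤ l →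
      f (p ^ l) ≤ A1 ^ l * Real.log (Real.log x) ^ (β * (l : ℝ))) ∧
  (∀ ε : ℝ, 0 < ε → ∀ n : ℕ, 1 ≤ n →
      f n ≤ max (A2 ε * x ^ ε) (A3 ε * Real.log x ^ ε))

/-- `n` is `J`-smooth: every prime factor of `n` is at most `J`. -/
def JSmooth (J : ℝ) (n : ℕ) : Prop := ∀ p ∈ n.primeFactors, (p : ℝ) ≤ J

/-- `n` is `J`-rough: every prime factor of `n` exceeds `J`. -/
def JRough (J : ℝ) (n : ℕ) : Prop := ∀ p ∈ n.primeFactors, J < (p : ℝ)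

instance (J : ℝ) : DecidablePred (JSmooth J) := fun n =>
  inferInstanceAs (Decidable (∀ p ∈ n.primeFactors, (p : ℝ) ≤ J))

instance (J : ℝ) : DecidablePred (JRough J) := fun n =>
  inferInstanceAs (Decidable (∀ p ∈ n.primeFactors, J < (p : ℝ)))

/-- The roughness/smoothness cutoff `J = (log log x)^(1-β)`. -/
def Jval (x β : ℝ) : ℝ := Real.log (Real.log x) ^ (1 - β)

/-- The Euler-product bound (7.4): `∑_{n ≤ x, (n,k)=1, n J-rough} f(n)/n^δ ≤
C · exp(∑_{J < p ≤ x, p ∤ k} f(p)/p^δ)` for `f ∈ M(β)` and `3/4 < δ ≤ 1`. -/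
lemma key_lemma (g : ℕ → ℝ) (hg0 : ∀ n, 0 ≤ g n) (hg1 : g 1 = 1)
    (hmul : ∀ m n : ℕ, 0 < m → 0 < n → Nat.Coprime m n → g (m * n) = g m * g n)
    (L : ℕ) :
    ∀ P : Finset ℕ, (∀ p ∈ P, p.Prime) →
    ∀ S : Finset ℕ, (∀ n ∈ S, 0 < n ∧ n.primeFactors ⊆ P ∧ ∀ q, n.factorization q ≤ L) →
    ∑ n ∈ S, g n ≤ ∏ p ∈ P, ∑ l ∈ Finset.range (L + 1), g (p ^ l) := by
  intro P
  induction P using Finset.induction_on with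
  | empty =>
    intro _ S hS
    have hsub : S ⊆ {1} := by
      intro n hn
      obtain ⟨hn0, hfac, _⟩ := hS n hn
      have h1 : n.primeFactors = ∅ := Finset.subset_empty.mp hfac
      have h2 := Nat.primeFactors_eq_empty.mp h1
      simp only [Finset.mem_singleton]
      omega
    calc ∑ n ∈ S, g n ≤ ∑ n ∈ ({1} : Finset ℕ), g n :=
          Finset.sum_le_sum_of_subset_of_nonneg hsub (fun i _ _ => hg0 i)
      _ = 1 := by simp [hg1]
      _ = _ := by simp
  | @insert p P' hpP' IH =>
    intro hP S hS
    have hp : p.Prime := hP p (Finset.mem_insert_self p P')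
    have hP' : ∀ q ∈ P', q.Prime := fun q hq => hP q (Finset.mem_insert_of_mem hq)
    have hmaps : ∀ n ∈ S, n.factorization p ∈ Finset.range (L + 1) := by
      intro n hn
      exact Finset.mem_range.mpr (Nat.lt_succ_of_le ((hS n hn).2.2 p))
    rw [← Finset.sum_fiberwise_of_maps_to hmaps g]
    rw [Finset.prod_insert hpP']
    rw [Finset.sum_mul]
    apply Finset.sum_le_sum
    intro v _
    set T := S.filter (fun n => n.factorization p = v) with hT
    have hTmem : ∀ n ∈ T, n ∈ S ∧ n.factorization p = v := by
      intro n hn; rw [hT, Finset.mem_filter] at hn; exact hn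
    have hfib : ∀ n ∈ T, p ^ v * (n / p ^ v) = n ∧ 0 < n / p ^ v ∧
        Nat.Coprime (p ^ v) (n / p ^ v) := by
      intro n hn
      obtain ⟨hnS, hv⟩ := hTmem n hn
      have hn0 : n ≠ 0 := (hS n hnS).1.ne'
      refine ⟨?_, ?_, ?_⟩
      · rw [← hv]; exact Nat.ordProj_mul_ordCompl_eq_self n p
      · rw [← hv]; exact Nat.ordCompl_pos p hn0
      · rw [← hv]; exact (Nat.coprime_ordCompl hp hn0).pow_left _
    have hsplit : ∀ n ∈ T, g n = g (p ^ v) * g (n / p ^ v) := by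
      intro n hn
      obtain ⟨heq, hpos, hcop⟩ := hfib n hn
      have h := hmul (p ^ v) (n / p ^ v) (pow_pos hp.pos v) hpos hcop
      rw [heq] at h
      exact h
    rw [Finset.sum_congr rfl hsplit, ← Finset.mul_sum]
    have hinj : ∀ n₁ ∈ T, ∀ n₂ ∈ T, n₁ / p ^ v = n₂ / p ^ v → n₁ = n₂ := by
      intro n₁ h₁ n₂ h₂ he
      have e₁ := (hfib n₁ h₁).1
      have e₂ := (hfib n₂ h₂).1
      rw [← e₁, ← e₂, he]
    rw [← Finset.sum_image hinj]
    have himage : ∀ m ∈ T.image (fun n => n / p ^ v),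
        0 < m ∧ m.primeFactors ⊆ P' ∧ ∀ q, m.factorization q ≤ L := by
      intro m hm
      obtain ⟨n, hn, rfl⟩ := Finset.mem_image.mp hm
      obtain ⟨hnS, hv⟩ := hTmem n hn
      obtain ⟨hn0', hfacsub, hfacle⟩ := hS n hnS
      have hn0 : n ≠ 0 := hn0'.ne'
      obtain ⟨heq, hpos, hcop⟩ := hfib n hn
      have hdvd : n / p ^ v ∣ n := by rw [← hv]; exact Nat.ordCompl_dvd n p
      refine ⟨hpos, ?_, ?_⟩
      · intro q hq
        have hqn : q ∈ n.primeFactors :=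
          Nat.primeFactors_mono hdvd hn0 hq
        have hqP : q ∈ insert p P' := hfacsub hqn
        have hqne : q ≠ p := by
          intro h
          rw [h] at hq
          have hqd : p ∣ n / p ^ v := Nat.dvd_of_mem_primeFactors hq
          rw [← hv] at hqd
          exact Nat.not_dvd_ordCompl hp hn0 hqd
        exact Finset.mem_insert.mp hqP |>.resolve_left hqne
      · intro q
        have hle : (n / p ^ v).factorization ≤ n.factorization :=
          (Nat.factorization_le_iff_dvd hpos.ne' hn0).mpr hdvd
        exact le_trans (hle q) (hfacle q)
    calc g (p ^ v) * ∑ m ∈ T.image (fun n => n / p ^ v), g m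
        ≤ g (p ^ v) * ∏ q ∈ P', ∑ l ∈ Finset.range (L + 1), g (q ^ l) :=
          mul_le_mul_of_nonneg_left (IH hP' _ himage) (hg0 _)
      _ = _ := rfl

lemma geom_tail (r : ℝ) (hr0 : 0 ≤ r) (hr : r ≤ 1/2) (N : ℕ) :
    ∑ l ∈ Finset.Ico 2 N, r ^ l ≤ 2 * r ^ 2 := by
  have h1 : ∑ l ∈ Finset.Ico 2 N, r ^ l ≤ ∑ l ∈ Finset.Ico 2 N, r ^ 2 * (1/2 : ℝ) ^ (l - 2) := by
    apply Finset.sum_le_sum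
    intro l hl
    have h2l : 2 ≤ l := (Finset.mem_Ico.mp hl).1
    have : r ^ l = r ^ 2 * r ^ (l - 2) := by
      rw [← pow_add]
      congr 1
      omega
    rw [this]
    exact mul_le_mul_of_nonneg_left (pow_le_pow_left₀ hr0 hr _) (pow_nonneg hr0 2)
  have h2 : ∑ l ∈ Finset.Ico 2 N, r ^ 2 * (1/2 : ℝ) ^ (l - 2)
      = r ^ 2 * ∑ i ∈ Finset.range (N - 2), (1/2 : ℝ) ^ i := by
    rw [← Finset.mul_sum, Finset.sum_Ico_eq_sum_range]
    congr 1
    apply Finset.sum_congr rfl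
    intro i _
    congr 1
    omega
  have h3 : ∑ i ∈ Finset.range (N - 2), (1/2 : ℝ) ^ i ≤ 2 := by
    rw [geom_sum_eq (by norm_num)]
    rw [div_le_iff_of_neg (by norm_num : ((1:ℝ)/2 - 1) < 0)]
    have h := pow_nonneg (by norm_num : (0:ℝ) ≤ 1/2) (N - 2)
    linarith
  calc ∑ l ∈ Finset.Ico 2 N, r ^ l ≤ r ^ 2 * ∑ i ∈ Finset.range (N - 2), (1/2 : ℝ) ^ i := by
        rw [← h2]; exact h1
    _ ≤ r ^ 2 * 2 := mul_le_mul_of_nonneg_left h3 (pow_nonneg hr0 2)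
    _ = 2 * r ^ 2 := by ring

set_option maxHeartbeats 1000000 in
theorem rough_euler_bound (β : ℝ) (hβ : 0 < β) (hβ' : β < 1/5)
    (A1 : ℝ) (hA1 : 0 < A1) (A2 A3 : ℝ → ℝ) :
    ∃ C : ℝ, 0 < C ∧ ∃ x0 : ℝ, ∀ x : ℝ, x0 ≤ x →
      ∀ f : ℕ → ℝ, MultNonneg f → InMβ f x β A1 A2 A3 →
      ∀ δ : ℝ, 3/4 < δ → δ ≤ 1 →
      ∀ k : ℕ, 1 ≤ k →
      ∑ n ∈ (Finset.Icc 1 ⌊x⌋₊).filter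
          (fun n : ℕ => Nat.Coprime n k ∧ JRough (Jval x β) n),
          f n / (n : ℝ) ^ δ
        ≤ C * Real.exp (∑ p ∈ (Finset.Icc 1 ⌊x⌋₊).filter
            (fun p : ℕ => p.Prime ∧ Jval x β < (p : ℝ) ∧ ¬ p ∣ k),
            f p / (p : ℝ) ^ δ) := by
  have ht1 : (1:ℝ) < 1 + (1 - 5*β)/4 := by linarith
  set t : ℝ := 1 + (1 - 5*β)/4 with htdef
  have hsumm : Summable (fun n : ℕ => 1 / (n:ℝ) ^ t) :=
    Real.summable_one_div_nat_rpow.mpr ht1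
  set K : ℝ := ∑' n : ℕ, 1 / (n:ℝ) ^ t with hKdef
  have hK0 : 0 ≤ K := tsum_nonneg (fun n => by positivity)
  have h37 : (0:ℝ) < 3 - 7*β := by linarith
  have h2A1 : (0:ℝ) < 2*A1 := by linarith
  set M : ℝ := max 1 ((2*A1) ^ ((4:ℝ)/(3 - 7*β))) with hMdef
  refine ⟨Real.exp (2*A1^2*K), Real.exp_pos _, Real.exp (Real.exp M), ?_⟩
  intro x hx f hfm hfMβ δ hδ1 hδ2 k hk
  obtain ⟨hf0, hf1, hfmul⟩ := hfm
  obtain ⟨hc1, -⟩ := hfMβ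
  set Lx : ℝ := Real.log (Real.log x) with hLxdef
  -- basic bounds from x ≥ x0
  have hexpM0 : (0:ℝ) < Real.exp M := Real.exp_pos M
  have hlogx : Real.exp M ≤ Real.log x := by
    have := Real.log_le_log (Real.exp_pos _) hx
    rwa [Real.log_exp] at this
  have hMLx : M ≤ Lx := by
    have := Real.log_le_log hexpM0 hlogx
    rwa [Real.log_exp] at this
  have hLx1 : (1:ℝ) ≤ Lx := le_trans (le_max_left _ _) hMLx
  have hLx0 : (0:ℝ) < Lx := lt_of_lt_of_le one_pos hLx1
  have hM2 : (2*A1) ^ ((4:ℝ)/(3 - 7*β)) ≤ Lx := le_trans (le_max_right _ _) hMLx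
  have hx1 : (1:ℝ) ≤ x := le_trans (Real.one_le_exp hexpM0.le) hx
  have hfloor1 : 1 ≤ ⌊x⌋₊ := Nat.le_floor (by exact_mod_cast hx1)
  -- the multiplicative weight g
  set g : ℕ → ℝ := fun n => f n / (n:ℝ) ^ δ with hgdef
  have hg0 : ∀ n, 0 ≤ g n := fun n => div_nonneg (hf0 n) (Real.rpow_nonneg (Nat.cast_nonneg n) δ)
  have hg1 : g 1 = 1 := by
    simp only [hgdef, Nat.cast_one, Real.one_rpow, hf1, div_one]
  have hgmul : ∀ m n : ℕ, 0 < m → 0 < n → Nat.Coprime m n → g (m * n) = g m * g n := by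
    intro m n hm hn hcop
    simp only [hgdef]
    rw [hfmul m n hcop]
    push_cast
    rw [Real.mul_rpow (Nat.cast_nonneg m) (Nat.cast_nonneg n)]
    ring
  set P := (Finset.Icc 1 ⌊x⌋₊).filter
      (fun p : ℕ => p.Prime ∧ Jval x β < (p : ℝ) ∧ ¬ p ∣ k) with hPdef
  have hPprime : ∀ p ∈ P, p.Prime := by
    intro p hp
    exact (Finset.mem_filter.mp hp).2.1
  -- Step A : apply the key lemma
  have hScond : ∀ n ∈ (Finset.Icc 1 ⌊x⌋₊).filter
      (fun n : ℕ => Nat.Coprime n k ∧ JRough (Jval x β) n),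
      0 < n ∧ n.primeFactors ⊆ P ∧ ∀ q, n.factorization q ≤ ⌊x⌋₊ := by
    intro n hn
    rw [Finset.mem_filter, Finset.mem_Icc] at hn
    obtain ⟨⟨hn1, hn2⟩, hcop, hrough⟩ := hn
    have hn0 : 0 < n := hn1
    refine ⟨hn0, ?_, ?_⟩
    · intro q hq
      have hqp : q.Prime := Nat.prime_of_mem_primeFactors hq
      have hqd : q ∣ n := Nat.dvd_of_mem_primeFactors hq
      rw [hPdef, Finset.mem_filter, Finset.mem_Icc]
      refine ⟨⟨hqp.one_lt.le, le_trans (Nat.le_of_dvd hn0 hqd) hn2⟩, hqp, hrough q hq, ?_⟩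
      intro hqk
      have hq1 : q ∣ Nat.gcd n k := Nat.dvd_gcd hqd hqk
      rw [hcop] at hq1
      exact hqp.one_lt.ne' (Nat.dvd_one.mp hq1)
    · intro q
      exact le_trans (Nat.factorization_lt q hn0.ne').le hn2
  have stepA : ∑ n ∈ (Finset.Icc 1 ⌊x⌋₊).filter
      (fun n : ℕ => Nat.Coprime n k ∧ JRough (Jval x β) n), g n
      ≤ ∏ p ∈ P, ∑ l ∈ Finset.range (⌊x⌋₊ + 1), g (p ^ l) :=
    key_lemma g hg0 hg1 hgmul ⌊x⌋₊ P hPprime _ hScond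
  -- Step B : per-factor bound
  have stepB : ∀ p ∈ P, ∑ l ∈ Finset.range (⌊x⌋₊ + 1), g (p ^ l)
      ≤ Real.exp (g p + 2 * A1 ^ 2 * (1 / (p:ℝ) ^ t)) := by
    intro p hpP
    rw [hPdef, Finset.mem_filter, Finset.mem_Icc] at hpP
    obtain ⟨⟨-, -⟩, hp, hpJ, -⟩ := hpP
    have hp1 : (1:ℝ) ≤ (p:ℝ) := by exact_mod_cast hp.one_lt.le
    have hp0 : (0:ℝ) < (p:ℝ) := lt_of_lt_of_le one_pos hp1
    have hpδ : (0:ℝ) < (p:ℝ) ^ δ := Real.rpow_pos_of_pos hp0 δ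
    have hJ0 : (0:ℝ) ≤ Jval x β := Real.rpow_nonneg hLx0.le _
    -- p^δ ≥ Lx^((1-β)*(3/4))
    have e1 : (p:ℝ) ^ ((3:ℝ)/4) ≤ (p:ℝ) ^ δ :=
      Real.rpow_le_rpow_of_exponent_le hp1 (le_of_lt hδ1)
    have e2 : (Jval x β) ^ ((3:ℝ)/4) ≤ (p:ℝ) ^ ((3:ℝ)/4) :=
      Real.rpow_le_rpow hJ0 hpJ.le (by norm_num)
    have e2' : (Jval x β) ^ ((3:ℝ)/4) = Lx ^ ((1-β) * ((3:ℝ)/4)) := by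
      rw [Jval, ← hLxdef, ← Real.rpow_mul hLx0.le]
    have e3 : Lx ^ ((1-β) * ((3:ℝ)/4)) ≤ (p:ℝ) ^ δ := by
      rw [← e2']; exact le_trans e2 e1
    -- 2*A1 ≤ Lx^((3-7β)/4)
    have e4 : 2*A1 ≤ Lx ^ ((3 - 7*β)/4) := by
      have hexp : (4:ℝ)/(3 - 7*β) * ((3 - 7*β)/4) = 1 := by
        field_simp
      calc 2*A1 = ((2*A1) ^ ((4:ℝ)/(3 - 7*β))) ^ ((3 - 7*β)/4) := by
            rw [← Real.rpow_mul h2A1.le, hexp, Real.rpow_one]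
        _ ≤ Lx ^ ((3 - 7*β)/4) :=
            Real.rpow_le_rpow (Real.rpow_nonneg h2A1.le _) hM2 (by positivity)
    have e5 : Lx ^ ((3 - 7*β)/4) * Lx ^ β = Lx ^ ((1-β) * ((3:ℝ)/4)) := by
      rw [← Real.rpow_add hLx0]
      congr 1
      ring
    have hb2 : 2*A1*Lx ^ β ≤ (p:ℝ) ^ δ := by
      calc 2*A1*Lx ^ β ≤ Lx ^ ((3 - 7*β)/4) * Lx ^ β :=
            mul_le_mul_of_nonneg_right e4 (Real.rpow_nonneg hLx0.le _)
        _ = Lx ^ ((1-β) * ((3:ℝ)/4)) := e5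
        _ ≤ (p:ℝ) ^ δ := e3
    set r : ℝ := A1 * Lx ^ β / (p:ℝ) ^ δ with hrdef
    have hLβ0 : (0:ℝ) < Lx ^ β := Real.rpow_pos_of_pos hLx0 β
    have hr0 : 0 ≤ r := by positivity
    have hr : r ≤ 1/2 := by
      rw [hrdef, div_le_iff₀ hpδ]
      linarith
    -- g p ≤ r
    have hgp : g p ≤ r := by
      have h := hc1 p hp 1 le_rfl
      rw [pow_one, pow_one] at h
      have h' : f p ≤ A1 * Lx ^ β := by
        have hb : β * ((1:ℕ):ℝ) = β := by push_cast; ring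
        rwa [hb] at h
      rw [hgdef, hrdef]
      simp only []
      gcongr
    -- tail bound
    have htail : ∀ l ∈ Finset.Ico 2 (⌊x⌋₊ + 1), g (p ^ l) ≤ r ^ l := by
      intro l hl
      have h2l : 2 ≤ l := (Finset.mem_Ico.mp hl).1
      have hfl := hc1 p hp l (by omega)
      have hcast : ((p ^ l : ℕ) : ℝ) ^ δ = ((p:ℝ) ^ δ) ^ l := by
        push_cast
        rw [← Real.rpow_natCast ((p:ℝ) ^ δ) l, ← Real.rpow_mul hp0.le,
          mul_comm δ (l:ℝ), Real.rpow_mul hp0.le, Real.rpow_natCast]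
      have hLcast : Lx ^ (β * (l:ℝ)) = (Lx ^ β) ^ l := by
        rw [Real.rpow_mul hLx0.le, Real.rpow_natCast]
      have hnum : f (p ^ l) ≤ (A1 * Lx ^ β) ^ l := by
        rw [mul_pow]
        rw [hLcast] at hfl
        exact hfl
      have hden : (0:ℝ) < ((p:ℝ) ^ δ) ^ l := pow_pos hpδ l
      rw [hgdef]
      simp only []
      rw [hcast]
      calc f (p ^ l) / ((p:ℝ) ^ δ) ^ l ≤ (A1 * Lx ^ β) ^ l / ((p:ℝ) ^ δ) ^ l := by gcongr
        _ = r ^ l := by rw [hrdef, div_pow]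
    have hgeo : ∑ l ∈ Finset.Ico 2 (⌊x⌋₊ + 1), g (p ^ l) ≤ 2 * r ^ 2 := by
      calc ∑ l ∈ Finset.Ico 2 (⌊x⌋₊ + 1), g (p ^ l)
          ≤ ∑ l ∈ Finset.Ico 2 (⌊x⌋₊ + 1), r ^ l := Finset.sum_le_sum htail
        _ ≤ 2 * r ^ 2 := geom_tail r hr0 hr _
    -- r^2 ≤ A1^2 / p^t
    have hpt : (0:ℝ) < (p:ℝ) ^ t := Real.rpow_pos_of_pos hp0 t
    have hr2 : r ^ 2 ≤ A1 ^ 2 * (1 / (p:ℝ) ^ t) := by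
      have s1 : ((p:ℝ) ^ δ) ^ 2 = (p:ℝ) ^ (δ * 2) := by
        rw [← Real.rpow_natCast ((p:ℝ) ^ δ) 2, ← Real.rpow_mul hp0.le]
        norm_num
      have s2 : (p:ℝ) ^ ((3:ℝ)/2) ≤ (p:ℝ) ^ (δ * 2) :=
        Real.rpow_le_rpow_of_exponent_le hp1 (by linarith)
      have s3 : (p:ℝ) ^ ((3:ℝ)/2) = (p:ℝ) ^ ((1 + 5*β)/4) * (p:ℝ) ^ t := by
        rw [← Real.rpow_add hp0]
        congr 1
        rw [htdef]
        ring
      have s4 : Lx ^ ((1-β) * ((1 + 5*β)/4)) ≤ (p:ℝ) ^ ((1 + 5*β)/4) := by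
        have h := Real.rpow_le_rpow hJ0 hpJ.le (by positivity : (0:ℝ) ≤ (1 + 5*β)/4)
        rwa [Jval, ← hLxdef, ← Real.rpow_mul hLx0.le] at h
      have s5 : Lx ^ (β * (2:ℝ)) ≤ Lx ^ ((1-β) * ((1 + 5*β)/4)) := by
        apply Real.rpow_le_rpow_of_exponent_le hLx1
        have hkey : (1-β) * ((1 + 5*β)/4) - β * 2 = (1 - 5*β) * (1 + β) / 4 := by ring
        have hpos : (0:ℝ) ≤ (1 - 5*β) * (1 + β) :=
          mul_nonneg (by linarith) (by linarith)
        linarith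
      have s6 : (Lx ^ β) ^ 2 = Lx ^ (β * (2:ℝ)) := by
        rw [← Real.rpow_natCast (Lx ^ β) 2, ← Real.rpow_mul hLx0.le]
        norm_num
      have sfin : (Lx ^ β) ^ 2 * (p:ℝ) ^ t ≤ ((p:ℝ) ^ δ) ^ 2 := by
        calc (Lx ^ β) ^ 2 * (p:ℝ) ^ t = Lx ^ (β * (2:ℝ)) * (p:ℝ) ^ t := by rw [s6]
          _ ≤ Lx ^ ((1-β) * ((1 + 5*β)/4)) * (p:ℝ) ^ t :=
              mul_le_mul_of_nonneg_right s5 hpt.le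
          _ ≤ (p:ℝ) ^ ((1 + 5*β)/4) * (p:ℝ) ^ t :=
              mul_le_mul_of_nonneg_right s4 hpt.le
          _ = (p:ℝ) ^ ((3:ℝ)/2) := s3.symm
          _ ≤ (p:ℝ) ^ (δ * 2) := s2
          _ = ((p:ℝ) ^ δ) ^ 2 := s1.symm
      have hLβ2 : (0:ℝ) < (Lx ^ β) ^ 2 := pow_pos hLβ0 2
      calc r ^ 2 = A1 ^ 2 * (Lx ^ β) ^ 2 / ((p:ℝ) ^ δ) ^ 2 := by
            rw [hrdef, div_pow, mul_pow]
        _ ≤ A1 ^ 2 * (Lx ^ β) ^ 2 / ((Lx ^ β) ^ 2 * (p:ℝ) ^ t) :=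
            div_le_div_of_nonneg_left (by positivity) (by positivity) sfin
        _ = A1 ^ 2 * (1 / (p:ℝ) ^ t) := by
            field_simp
    -- assemble the factor bound
    have hsplitsum : ∑ l ∈ Finset.range (⌊x⌋₊ + 1), g (p ^ l)
        = g 1 + g p + ∑ l ∈ Finset.Ico 2 (⌊x⌋₊ + 1), g (p ^ l) := by
      rw [Finset.range_eq_Ico,
        Finset.sum_eq_sum_Ico_succ_bot (by omega : 0 < ⌊x⌋₊ + 1),
        Finset.sum_eq_sum_Ico_succ_bot (by omega : 1 < ⌊x⌋₊ + 1)]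
      rw [pow_zero, pow_one]
      ring
    calc ∑ l ∈ Finset.range (⌊x⌋₊ + 1), g (p ^ l)
        = g 1 + g p + ∑ l ∈ Finset.Ico 2 (⌊x⌋₊ + 1), g (p ^ l) := hsplitsum
      _ ≤ 1 + g p + 2 * r ^ 2 := by rw [hg1]; exact add_le_add le_rfl hgeo
      _ ≤ 1 + g p + 2 * (A1 ^ 2 * (1 / (p:ℝ) ^ t)) :=
          add_le_add le_rfl (mul_le_mul_of_nonneg_left hr2 (by norm_num))
      _ = (g p + 2 * A1 ^ 2 * (1 / (p:ℝ) ^ t)) + 1 := by ring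
      _ ≤ Real.exp (g p + 2 * A1 ^ 2 * (1 / (p:ℝ) ^ t)) := Real.add_one_le_exp _
  -- Step C : combine
  have hfacnonneg : ∀ p ∈ P, 0 ≤ ∑ l ∈ Finset.range (⌊x⌋₊ + 1), g (p ^ l) :=
    fun p _ => Finset.sum_nonneg (fun l _ => hg0 _)
  have hsumtsum : ∑ p ∈ P, (1 / (p:ℝ) ^ t) ≤ K :=
    Summable.sum_le_tsum P (fun i _ => by positivity) hsumm
  calc ∑ n ∈ (Finset.Icc 1 ⌊x⌋₊).filter
        (fun n : ℕ => Nat.Coprime n k ∧ JRough (Jval x β) n), g n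
      ≤ ∏ p ∈ P, ∑ l ∈ Finset.range (⌊x⌋₊ + 1), g (p ^ l) := stepA
    _ ≤ ∏ p ∈ P, Real.exp (g p + 2 * A1 ^ 2 * (1 / (p:ℝ) ^ t)) :=
        Finset.prod_le_prod hfacnonneg stepB
    _ = Real.exp (∑ p ∈ P, (g p + 2 * A1 ^ 2 * (1 / (p:ℝ) ^ t))) :=
        (Real.exp_sum P _).symm
    _ = Real.exp (∑ p ∈ P, g p + 2 * A1 ^ 2 * ∑ p ∈ P, (1 / (p:ℝ) ^ t)) := by
        rw [Finset.sum_add_distrib, Finset.mul_sum]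
    _ ≤ Real.exp (∑ p ∈ P, g p + 2 * A1 ^ 2 * K) := by
        apply Real.exp_le_exp.mpr
        exact add_le_add le_rfl
          (mul_le_mul_of_nonneg_left hsumtsum (by positivity : (0:ℝ) ≤ 2 * A1 ^ 2))
    _ = Real.exp (2 * A1 ^ 2 * K) * Real.exp (∑ p ∈ P, g p) := by
        rw [← Real.exp_add]
        congr 1
        ring
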